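/- Let Γ be a finite unsigned GKM₃ graph. Then any two edges of Γ with a common initial vertex belong to a common 2-face of Γ. -/

import Mathlib

attribute [local instance] Classical.propDecidable

/-- A graph with directed edges `E`, vertices `V`, edge reversal, and a
(combinatorial) connection `conn`, where `conn e e'` is the transport of an
edge `e'` with `ini e' = ini e` along the edge `e`. -/
structure ConnGraph (V : Type*) (E : Type*) where
  ini : E → V
  ter : E → V
  rev : E → E
  rev_ini : ∀ e, ini (rev e) = ter e
  rev_ter : ∀ e, ter (rev e) = ini e
  rev_rev : ∀ e, rev (rev e) = e
  conn : E → E → E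
  conn_ini : ∀ e e', ini e' = ini e → ini (conn e e') = ter e
  conn_self : ∀ e, conn e e = rev e
  conn_inv : ∀ e e', ini e' = ini e → conn (rev e) (conn e e') = e'

namespace ConnGraph

variable {V E : Type*} (G : ConnGraph V E)

/-- One step of adjacency along an edge. -/
def Step (a b : V) : Prop := ∃ e : E, G.ini e = a ∧ G.ter e = b

/-- The graph is connected. -/
def Connected : Prop := ∀ a b : V, Relation.ReflTransGen G.Step a b

/-- The graph is `n`-valent: every star has exactly `n` edges. -/
def NValent (n : ℕ) : Prop := ∀ v : V, {e : E | G.ini e = v}.ncard = n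

/-- A sign function on a graph with connection: `ε e e'` plays the role of
`⟨ε(e), e'⟩` for `e'` in the star of `ini e`. -/
def IsSignFunction (ε : E → E → ℤ) : Prop :=
  (∀ e e' : E, G.ini e' = G.ini e → ε e e' = 1 ∨ ε e e' = -1) ∧
  (∀ e : E, ε e e = 1) ∧
  (∀ e e' : E, G.ini e' = G.ini e → ε (G.rev e) (G.conn e e') = ε e e')

/-- An invariant function (relative to a sign function): `c e e'` plays the
role of `⟨c(e), e'⟩`. -/
def IsInvariantFunction (ε c : E → E → ℤ) : Prop :=
  (∀ e : E, c e e = -2) ∧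
  (∀ e e' : E, G.ini e' = G.ini e →
    c e e' = ε (G.rev e) (G.conn e e') * c (G.rev e) (G.conn e e'))

/-- A label function: an element of the group `L(Γ)`. -/
def IsLabelFunction (ε c : E → E → ℤ) (a : E → ℤ) : Prop :=
  ∀ e e' : E, G.ini e' = G.ini e →
    a (G.conn e e') = ε e e' * a e' + c e e' * a e

/-- `x : E → ℤ` represents an element of `ℤ star(v)`:
it is supported on the star of `v`. -/
def StarSupported (v : V) (x : E → ℤ) : Prop := ∀ e : E, G.ini e ≠ v → x e = 0

/-- An element of the group of axial functions `A(Γ)`: a tuple `(f v)_{v ∈ V}`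
with `f v ∈ ℤ star(v)`, satisfying `f (t e) = φ_e (f (i e))` for every edge. -/
def IsAxialTuple (ε c : E → E → ℤ) (f : V → E → ℤ) : Prop :=
  (∀ v : V, G.StarSupported v (f v)) ∧
  (∀ e e' : E, G.ini e' = G.ini e →
    f (G.ter e) (G.conn e e') = ε e e' * f (G.ini e) e' + f (G.ini e) e * c e e')

/-- The map `φ_e : ℤ star(i e) → ℤ star(t e)`,
`φ_e(x) = ∇_e (ε(e)·x + ⟨x, e⟩·c(e))`. -/
noncomputable def phi (ε c : E → E → ℤ) (e : E) (x : E → ℤ) : E → ℤ := fun e'' =>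
  if G.ini e'' = G.ter e then
    ε e (G.conn (G.rev e) e'') * x (G.conn (G.rev e) e'') +
      x e * c e (G.conn (G.rev e) e'')
  else 0

/-- `φ_γ` for an edge path `γ = (e₁, …, e_q)`: the composite
`φ_{e_q} ∘ ⋯ ∘ φ_{e₁}`. -/
noncomputable def phiList (ε c : E → E → ℤ) : List E → (E → ℤ) → (E → ℤ)
  | [], x => x
  | e :: l, x => phiList ε c l (G.phi ε c e x)

/-- The parallel transport (monodromy) operator `Π_γ = ∇_{e_q} ∘ ⋯ ∘ ∇_{e₁}`
along an edge path, on edges. -/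
def transportList : List E → E → E
  | [], x => x
  | e :: l, x => transportList l (G.conn e x)

/-- `IsPath u w l`: the list of edges `l` is an edge path from `u` to `w`. -/
def IsPath : V → V → List E → Prop
  | u, w, [] => u = w
  | u, w, e :: l => G.ini e = u ∧ IsPath (G.ter e) w l

/-- Elementary homotopy of edge paths: deletion of a backtrack `(e, ē)`. -/
inductive HomotopyStep : List E → List E → Prop
  | backtrack (l₁ l₂ : List E) (e : E) :
      HomotopyStep (l₁ ++ e :: G.rev e :: l₂) (l₁ ++ l₂)

/-- Homotopy of edge paths: the equivalence relation generated by insertion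
and deletion of backtracks. -/
def Homotopic : List E → List E → Prop := Relation.EqvGen G.HomotopyStep

/-- A 2-face: a nonempty connected 2-valent subgraph (given by its set of
edges, closed under reversal) which is invariant under the connection. -/
def IsTwoFace (F : Set E) : Prop :=
  F.Nonempty ∧
  (∀ e ∈ F, G.rev e ∈ F) ∧
  (∀ e ∈ F, {e' : E | e' ∈ F ∧ G.ini e' = G.ini e}.ncard = 2) ∧
  (∀ e ∈ F, ∀ e' ∈ F, G.ini e' = G.ini e → G.conn e e' ∈ F) ∧
  (∀ e ∈ F, ∀ e' ∈ F, ∃ l : List E,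
    (∀ x ∈ l, x ∈ F) ∧ G.IsPath (G.ini e) (G.ini e') l)

/-- `f` is a boundary cycle of the 2-face `F`, based at `w`: a closed edge
path at `w` traversing each geometric edge of `F` exactly once. -/
def IsFaceBoundary (F : Set E) (w : V) (f : List E) : Prop :=
  G.IsTwoFace F ∧ f ≠ [] ∧ G.IsPath w w f ∧ (∀ e ∈ f, e ∈ F) ∧
  f.Nodup ∧ (∀ e ∈ f, G.rev e ∉ f) ∧ (∀ e ∈ F, e ∈ f ∨ G.rev e ∈ f)

/-- A conjugated 2-face at the base vertex `v`: a loop of the form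
`g · f · g⁻¹` where `g` is an edge path from `v` and `f` is a boundary cycle
of a 2-face based at the endpoint of `g`. -/
def ConjFaceLoop (v : V) (l : List E) : Prop :=
  ∃ (w : V) (g f : List E) (F : Set E),
    G.IsPath v w g ∧ G.IsFaceBoundary F w f ∧
    l = g ++ f ++ (g.reverse.map G.rev)

/-- The conjugated 2-faces generate the fundamental group (the edge-path
group): every closed edge path is homotopic to a concatenation of conjugated
2-face loops. -/
def FacesGeneratePi1 : Prop :=
  ∀ (v : V) (l : List E), G.IsPath v v l →
    ∃ ls : List (List E), (∀ m ∈ ls, G.ConjFaceLoop v m) ∧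
      G.Homotopic l ls.flatten

end ConnGraph

/-- `(G, lab)` is an abstract unsigned GKM graph, where `lab` is a chosen lift
`α̃ : E → ℤ^k` of the unsigned axial function `α : E → ℤ^k/±1`. -/
structure IsUnsignedGKM {V E : Type*} (G : ConnGraph V E) {k : ℕ}
    (lab : E → Fin k → ℤ) : Prop where
  connected : G.Connected
  lab_ne : ∀ e : E, lab e ≠ 0
  lab_rev : ∀ e : E, lab (G.rev e) = -lab e
  indep₂ : ∀ e e' : E, G.ini e' = G.ini e → e ≠ e' →
    LinearIndependent ℚ ![(fun j => (lab e j : ℚ)), (fun j => (lab e' j : ℚ))]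
  congru : ∀ e e' : E, G.ini e' = G.ini e →
    ∃ s m : ℤ, (s = 1 ∨ s = -1) ∧ lab (G.conn e e') = s • lab e' + m • lab e

/-- The GKM₃ condition: any three labels at a common vertex are linearly
independent over `ℚ`. -/
def IsGKM3 {V E : Type*} (G : ConnGraph V E) {k : ℕ} (lab : E → Fin k → ℤ) : Prop :=
  ∀ e₁ e₂ e₃ : E, G.ini e₂ = G.ini e₁ → G.ini e₃ = G.ini e₁ →
    e₁ ≠ e₂ → e₁ ≠ e₃ → e₂ ≠ e₃ →
    LinearIndependent ℚ
      ![(fun j => (lab e₁ j : ℚ)), (fun j => (lab e₂ j : ℚ)),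
        (fun j => (lab e₃ j : ℚ))]

/-- `(ε, c)` are the sign and integer data associated to the lift `lab` of the
axial function, via the congruence relation
`α̃(∇_e e') = ⟨ε(e),e'⟩·α̃(e') + ⟨c(e),e'⟩·α̃(e)`, normalized by
`⟨ε(e),e⟩ = 1` and `⟨c(e),e⟩ = -2`. -/
def IsCompatibleData {V E : Type*} (G : ConnGraph V E) {k : ℕ}
    (lab : E → Fin k → ℤ) (ε c : E → E → ℤ) : Prop :=
  (∀ e e' : E, G.ini e' = G.ini e → ε e e' = 1 ∨ ε e e' = -1) ∧
  (∀ e : E, ε e e = 1) ∧ (∀ e : E, c e e = -2) ∧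
  (∀ e e' : E, G.ini e' = G.ini e →
    lab (G.conn e e') = ε e e' • lab e' + c e e' • lab e)

/-- The axial function is almost effective: the `ℤ`-span of its image has
finite index in `ℤ^k`. -/
def AlmostEffective {E : Type*} {k : ℕ} (lab : E → Fin k → ℤ) : Prop :=
  (Submodule.span ℤ (Set.range lab)).toAddSubgroup.index ≠ 0

/-- The axial function is effective: the `ℤ`-span of its image is all
of `ℤ^k`. -/
def Effective {E : Type*} {k : ℕ} (lab : E → Fin k → ℤ) : Prop :=
  Submodule.span ℤ (Set.range lab) = ⊤


/-- Rational lift of labels. -/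
def labQf {E : Type*} {k : ℕ} (lab : E → Fin k → ℤ) (x : E) : Fin k → ℚ :=
  fun j => (lab x j : ℚ)

section GKMAux

variable {V E : Type*}

/-- States: pairs of edges with common initial vertex. -/
def GS (G : ConnGraph V E) : Type _ := {p : E × E // G.ini p.2 = G.ini p.1}

/-- One step of traversal of a (putative) 2-face. -/
def gSigma (G : ConnGraph V E) : Equiv.Perm (GS G) where
  toFun s := ⟨(G.conn s.1.1 s.1.2, G.rev s.1.1), by rw [G.rev_ini, G.conn_ini _ _ s.2]⟩
  invFun s := ⟨(G.rev s.1.2, G.conn s.1.2 s.1.1), by rw [G.conn_ini _ _ s.2.symm, G.rev_ini]⟩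
  left_inv s := by
    apply Subtype.ext
    refine Prod.ext ?_ ?_
    · exact G.rev_rev _
    · exact G.conn_inv _ _ s.2
  right_inv s := by
    apply Subtype.ext
    refine Prod.ext ?_ ?_
    · exact G.conn_inv _ _ s.2.symm
    · exact G.rev_rev _

/-- The orbit of a state under the step. -/
def tOrb (G : ConnGraph V E) (s₀ : GS G) (i : ℤ) : GS G := ((gSigma G) ^ i) s₀

lemma tOrb_zero (G : ConnGraph V E) (s₀ : GS G) : tOrb G s₀ 0 = s₀ := by
  simp [tOrb]

lemma tOrb_add_one (G : ConnGraph V E) (s₀ : GS G) (i : ℤ) :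
    tOrb G s₀ (i + 1) = gSigma G (tOrb G s₀ i) := by
  unfold tOrb
  rw [add_comm, zpow_add, zpow_one, Equiv.Perm.mul_apply]

lemma tOrb_sub_one (G : ConnGraph V E) (s₀ : GS G) (i : ℤ) :
    tOrb G s₀ (i - 1) = (gSigma G).symm (tOrb G s₀ i) := by
  have h := tOrb_add_one G s₀ (i - 1)
  rw [sub_add_cancel] at h
  rw [h, Equiv.symm_apply_apply]

lemma gSigma_fst (G : ConnGraph V E) (s : GS G) :
    (gSigma G s).1.1 = G.conn s.1.1 s.1.2 := rfl

lemma gSigma_snd (G : ConnGraph V E) (s : GS G) :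
    (gSigma G s).1.2 = G.rev s.1.1 := rfl

lemma gSigma_symm_fst (G : ConnGraph V E) (s : GS G) :
    ((gSigma G).symm s).1.1 = G.rev s.1.2 := rfl

lemma gSigma_symm_snd (G : ConnGraph V E) (s : GS G) :
    ((gSigma G).symm s).1.2 = G.conn s.1.2 s.1.1 := rfl

lemma isPath_append (G : ConnGraph V E) {u w z : V} {l l' : List E}
    (h : G.IsPath u w l) (h' : G.IsPath w z l') : G.IsPath u z (l ++ l') := by
  induction l generalizing u with
  | nil => simp only [ConnGraph.IsPath] at h; subst h; simpa using h'
  | cons a l ih => exact ⟨h.1, ih h.2⟩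

end GKMAux

/-- In a finite unsigned GKM₃ graph, any two (distinct) edges
with a common initial vertex belong to a common 2-face. -/
theorem twoFace_of_two_edges {V E : Type*} [Fintype V] [Fintype E] {n k : ℕ}
    (G : ConnGraph V E) (lab : E → Fin k → ℤ)
    (hGKM : IsUnsignedGKM G lab) (hval : G.NValent n) (h3 : IsGKM3 G lab) :
    ∀ e e' : E, G.ini e' = G.ini e → e ≠ e' →
      ∃ F : Set E, G.IsTwoFace F ∧ e ∈ F ∧ e' ∈ F := by
  classical
  intro e e' hini hne
  set W : Submodule ℚ (Fin k → ℚ) :=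
    Submodule.span ℚ (Set.range ![labQf lab e, labQf lab e']) with hWdef
  have heW : labQf lab e ∈ W := Submodule.subset_span ⟨0, rfl⟩
  have he'W : labQf lab e' ∈ W := Submodule.subset_span ⟨1, rfl⟩
  have hWle : Module.finrank ℚ W ≤ 2 := by
    have h := finrank_span_le_card (R := ℚ) (Set.range ![labQf lab e, labQf lab e'])
    refine h.trans ?_
    rw [Set.toFinset_range]
    exact (Finset.card_image_le).trans (by simp)
  have hrevQ : ∀ a : E, labQf lab (G.rev a) = -labQf lab a := by
    intro a; funext j
    simp only [labQf, hGKM.lab_rev a, Pi.neg_apply, Int.cast_neg]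
  have hconnQ : ∀ a b : E, G.ini b = G.ini a → labQf lab a ∈ W → labQf lab b ∈ W →
      labQf lab (G.conn a b) ∈ W := by
    intro a b hab ha hb
    obtain ⟨s, m, _, hsm⟩ := hGKM.congru a b hab
    have heq : labQf lab (G.conn a b) = (s : ℚ) • labQf lab b + (m : ℚ) • labQf lab a := by
      funext j
      have h2 := congrFun hsm j
      simp only [Pi.add_apply, Pi.smul_apply, smul_eq_mul] at h2
      simp only [labQf, Pi.add_apply, Pi.smul_apply, smul_eq_mul, h2]
      push_cast
      ring
    rw [heq]
    exact Submodule.add_mem _ (Submodule.smul_mem _ _ hb) (Submodule.smul_mem _ _ ha)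
  have hinj : ∀ a b b' : E, G.ini b = G.ini a → G.ini b' = G.ini a →
      G.conn a b = G.conn a b' → b = b' := by
    intro a b b' hb hb' hcc
    have h1 := G.conn_inv a b hb
    have h2 := G.conn_inv a b' hb'
    rw [← h1, ← h2, hcc]
  set s₀ : GS G := ⟨(e, e'), hini⟩ with hs₀def
  set t : ℤ → GS G := tOrb G s₀ with htdef
  have ht0 : t 0 = s₀ := tOrb_zero G s₀
  have hstep : ∀ i, t (i + 1) = gSigma G (t i) := fun i => tOrb_add_one G s₀ i
  have hpred : ∀ i, t (i - 1) = (gSigma G).symm (t i) := fun i => tOrb_sub_one G s₀ i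
  have hP : ∀ i : ℤ, labQf lab (t i).1.1 ∈ W ∧ labQf lab (t i).1.2 ∈ W ∧
      (t i).1.1 ≠ (t i).1.2 := by
    intro i
    induction i using Int.induction_on with
    | zero =>
      rw [ht0]
      exact ⟨heW, he'W, hne⟩
    | succ i ih =>
      rw [hstep]
      have hab : G.ini (t i).1.2 = G.ini (t i).1.1 := (t i).2
      refine ⟨hconnQ _ _ hab ih.1 ih.2.1, ?_, ?_⟩
      · show labQf lab (G.rev (t i).1.1) ∈ W
        rw [hrevQ]; exact neg_mem ih.1
      · show G.conn (t i).1.1 (t i).1.2 ≠ G.rev (t i).1.1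
        intro hc
        have hcc : G.conn (t i).1.1 (t i).1.2 = G.conn (t i).1.1 (t i).1.1 := by
          rw [hc, G.conn_self]
        exact ih.2.2 (hinj _ _ _ hab rfl hcc).symm
    | pred i ih =>
      rw [hpred]
      have hab : G.ini (t (-i : ℤ)).1.2 = G.ini (t (-i : ℤ)).1.1 := (t (-i : ℤ)).2
      refine ⟨?_, hconnQ _ _ hab.symm ih.2.1 ih.1, ?_⟩
      · show labQf lab (G.rev (t (-i : ℤ)).1.2) ∈ W
        rw [hrevQ]; exact neg_mem ih.2.1
      · show G.rev (t (-i : ℤ)).1.2 ≠ G.conn (t (-i : ℤ)).1.2 (t (-i : ℤ)).1.1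
        intro hc
        have hcc : G.conn (t (-i : ℤ)).1.2 (t (-i : ℤ)).1.2
            = G.conn (t (-i : ℤ)).1.2 (t (-i : ℤ)).1.1 := by
          rw [G.conn_self, hc]
        exact ih.2.2 (hinj _ _ _ rfl hab.symm hcc).symm
  set F : Set E := {x | ∃ i : ℤ, x = (t i).1.1 ∨ x = (t i).1.2} with hFdef
  have heF : e ∈ F := ⟨0, Or.inl (by rw [ht0])⟩
  have he'F : e' ∈ F := ⟨0, Or.inr (by rw [ht0])⟩
  have hFW : ∀ x ∈ F, labQf lab x ∈ W := by
    rintro x ⟨i, h | h⟩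
    · rw [h]; exact (hP i).1
    · rw [h]; exact (hP i).2.1
  have hFrev : ∀ x ∈ F, G.rev x ∈ F := by
    rintro x ⟨i, h | h⟩
    · exact ⟨i + 1, Or.inr (by rw [hstep, gSigma_snd, h])⟩
    · exact ⟨i - 1, Or.inl (by rw [hpred, gSigma_symm_fst, h])⟩
  have huniq : ∀ (i : ℤ) (x : E), x ∈ F → G.ini x = G.ini (t i).1.1 →
      x = (t i).1.1 ∨ x = (t i).1.2 := by
    intro i x hxF hxi
    by_contra hcon
    push_neg at hcon
    have hcd : (t i).1.1 ≠ (t i).1.2 := (hP i).2.2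
    have li := h3 (t i).1.1 (t i).1.2 x (t i).2 hxi hcd
      (fun h => hcon.1 h.symm) (fun h => hcon.2 h.symm)
    have h1 : labQf lab (t i).1.1 ∈ W := (hP i).1
    have h2 : labQf lab (t i).1.2 ∈ W := (hP i).2.1
    have hx : labQf lab x ∈ W := hFW x hxF
    have hle : Submodule.span ℚ
        (Set.range ![labQf lab (t i).1.1, labQf lab (t i).1.2, labQf lab x]) ≤ W := by
      rw [Submodule.span_le]
      rintro y ⟨j, rfl⟩
      fin_cases j
      · simpa using h1
      · simpa using h2
      · simpa using hx
    have h33 : Module.finrank ℚ (Submodule.span ℚ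
        (Set.range ![labQf lab (t i).1.1, labQf lab (t i).1.2, labQf lab x])) = 3 := by
      have h := finrank_span_eq_card li
      simp at h
      exact h
    have hmono := Submodule.finrank_mono hle
    rw [h33] at hmono
    omega
  have hcard : ∀ a ∈ F, {x : E | x ∈ F ∧ G.ini x = G.ini a}.ncard = 2 := by
    rintro a ⟨i, ha⟩
    have hia : G.ini a = G.ini (t i).1.1 := by
      rcases ha with h | h
      · rw [h]
      · rw [h]; exact (t i).2
    have hset : {x : E | x ∈ F ∧ G.ini x = G.ini a} = {(t i).1.1, (t i).1.2} := by
      ext x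
      simp only [Set.mem_setOf_eq, Set.mem_insert_iff, Set.mem_singleton_iff]
      constructor
      · rintro ⟨hxF, hx⟩; exact huniq i x hxF (hx.trans hia)
      · rintro (rfl | rfl)
        · exact ⟨⟨i, Or.inl rfl⟩, hia.symm⟩
        · exact ⟨⟨i, Or.inr rfl⟩, (t i).2.trans hia.symm⟩
    rw [hset, Set.ncard_pair (hP i).2.2]
  have hFconn : ∀ a ∈ F, ∀ b ∈ F, G.ini b = G.ini a → G.conn a b ∈ F := by
    rintro a ⟨i, ha⟩ b hbF hba
    have hia : G.ini a = G.ini (t i).1.1 := by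
      rcases ha with h | h
      · rw [h]
      · rw [h]; exact (t i).2
    have hb2 := huniq i b hbF (hba.trans hia)
    rcases ha with rfl | rfl <;> rcases hb2 with rfl | rfl
    · rw [G.conn_self]; exact hFrev _ ⟨i, Or.inl rfl⟩
    · exact ⟨i + 1, Or.inl (by rw [hstep, gSigma_fst])⟩
    · exact ⟨i - 1, Or.inr (by rw [hpred, gSigma_symm_snd])⟩
    · rw [G.conn_self]; exact hFrev _ ⟨i, Or.inr rfl⟩
  have hvtx : ∀ i : ℤ,
      (∃ l : List E, (∀ x ∈ l, x ∈ F) ∧ G.IsPath (G.ini (t 0).1.1) (G.ini (t i).1.1) l) ∧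
      (∃ l : List E, (∀ x ∈ l, x ∈ F) ∧ G.IsPath (G.ini (t i).1.1) (G.ini (t 0).1.1) l) := by
    intro i
    induction i using Int.induction_on with
    | zero =>
      refine ⟨⟨[], by simp, ?_⟩, ⟨[], by simp, ?_⟩⟩ <;> rfl
    | succ i ih =>
      obtain ⟨⟨l1, hl1F, hl1⟩, ⟨l2, hl2F, hl2⟩⟩ := ih
      have hterm : G.ini (t ((i : ℤ) + 1)).1.1 = G.ter (t (i : ℤ)).1.1 := by
        rw [hstep]; exact G.conn_ini _ _ (t (i : ℤ)).2
      constructor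
      · refine ⟨l1 ++ [(t (i : ℤ)).1.1], ?_, ?_⟩
        · intro x hx
          rcases List.mem_append.mp hx with h | h
          · exact hl1F x h
          · rw [List.mem_singleton.mp h]; exact ⟨i, Or.inl rfl⟩
        · refine isPath_append G hl1 ⟨rfl, ?_⟩
          exact hterm.symm
      · refine ⟨G.rev (t (i : ℤ)).1.1 :: l2, ?_, ?_, ?_⟩
        · intro x hx
          rcases List.mem_cons.mp hx with h | h
          · rw [h]; exact hFrev _ ⟨i, Or.inl rfl⟩
          · exact hl2F x h
        · rw [G.rev_ini]; exact hterm.symm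
        · rw [G.rev_ter]; exact hl2
    | pred i ih =>
      obtain ⟨⟨l1, hl1F, hl1⟩, ⟨l2, hl2F, hl2⟩⟩ := ih
      have hmap : t (-(i : ℤ)) = gSigma G (t (-(i : ℤ) - 1)) := by
        have h := hstep (-(i : ℤ) - 1)
        rwa [sub_add_cancel] at h
      have hterm : G.ini (t (-(i : ℤ))).1.1 = G.ter (t (-(i : ℤ) - 1)).1.1 := by
        rw [hmap]; exact G.conn_ini _ _ (t (-(i : ℤ) - 1)).2
      constructor
      · refine ⟨l1 ++ [G.rev (t (-(i : ℤ) - 1)).1.1], ?_, ?_⟩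
        · intro x hx
          rcases List.mem_append.mp hx with h | h
          · exact hl1F x h
          · rw [List.mem_singleton.mp h]
            exact hFrev _ ⟨-(i : ℤ) - 1, Or.inl rfl⟩
        · refine isPath_append G hl1 ⟨?_, ?_⟩
          · rw [G.rev_ini]; exact hterm.symm
          · exact G.rev_ter _
      · refine ⟨(t (-(i : ℤ) - 1)).1.1 :: l2, ?_, rfl, ?_⟩
        · intro x hx
          rcases List.mem_cons.mp hx with h | h
          · rw [h]; exact ⟨-(i : ℤ) - 1, Or.inl rfl⟩
          · exact hl2F x h
        · rw [← hterm]; exact hl2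
  refine ⟨F, ⟨⟨e, heF⟩, hFrev, hcard, hFconn, ?_⟩, heF, he'F⟩
  rintro a ⟨i, ha⟩ b ⟨j, hb⟩
  have hia : G.ini a = G.ini (t i).1.1 := by
    rcases ha with h | h
    · rw [h]
    · rw [h]; exact (t i).2
  have hjb : G.ini b = G.ini (t j).1.1 := by
    rcases hb with h | h
    · rw [h]
    · rw [h]; exact (t j).2
  obtain ⟨l2, hl2F, hl2⟩ := (hvtx i).2
  obtain ⟨l1, hl1F, hl1⟩ := (hvtx j).1
  refine ⟨l2 ++ l1, ?_, ?_⟩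
  · intro x hx
    rcases List.mem_append.mp hx with h | h
    · exact hl2F x h
    · exact hl1F x h
  · rw [hia, hjb]
    exact isPath_append G hl2 hl1
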